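/- Let Σ be a finite nonempty alphabet, P a stochastic language over Σ, and let A = (ι, (T_x)_{x∈Σ}, τ) be a multiplicity automaton with finite state set Q that is a reduced representation of P. Suppose C_A > 0 and ρ_A ∈ (0,1) are such that for every integer k ≥ 0 and all states q, q' ∈ Q, Σ_{u∈Σ^k} |T_u(q,q')| ≤ C_A·ρ_A^k. Then for every ρ with ρ_A < ρ < 1 there exist C > 0 and α > 0 such that every multiplicity automaton B = (ι_B, (T^B_x)_{x∈Σ}, τ_B) with the same state set Q satisfying |T^B_x(q,q') − T_x(q,q')| < α for all x ∈ Σ and q, q' ∈ Q has Σ_{u∈Σ^k} |T^B_u(q,q')| ≤ C·ρ^k for every k ≥ 0 and all q, q' ∈ Q; consequently the series r_B is absolutely convergent: Σ_{w∈Σ*} |r_B(w)| < ∞. -/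

import Mathlib

open scoped BigOperators Matrix

/-- A stochastic language over the alphabet `A`: a nonnegative real-valued function on
words whose values are summable with sum `1`. -/
def IsStochastic {A : Type*} (p : List A → ℝ) : Prop :=
  (∀ w, 0 ≤ p w) ∧ HasSum p 1

/-- The matrix associated to a word: the product of the letter matrices. -/
def wordMat {A Q : Type*} [Fintype Q] [DecidableEq Q] (T : A → Matrix Q Q ℝ)
    (w : List A) : Matrix Q Q ℝ :=
  (w.map T).prod

/-- The series computed by the multiplicity automaton `(ι, T, τ)`. -/
def maSeries {A Q : Type*} [Fintype Q] [DecidableEq Q] (ι τ : Q → ℝ)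
    (T : A → Matrix Q Q ℝ) (w : List A) : ℝ :=
  ι ⬝ᵥ (wordMat T w).mulVec τ

/-- The series of state `q` of the multiplicity automaton. -/
def stateSeries {A Q : Type*} [Fintype Q] [DecidableEq Q] (τ : Q → ℝ)
    (T : A → Matrix Q Q ℝ) (q : Q) (w : List A) : ℝ :=
  (wordMat T w).mulVec τ q

/-- `(ι, T, τ)` is a reduced representation of the stochastic language `P`. -/
def IsReducedRep {A Q : Type*} [Fintype Q] [DecidableEq Q] (ι τ : Q → ℝ)
    (T : A → Matrix Q Q ℝ) (P : List A → ℝ) : Prop :=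
  maSeries ι τ T = P ∧ (∀ q, IsStochastic (stateSeries τ T q)) ∧
    LinearIndependent ℝ (stateSeries τ T)

section Aux
variable {A Q : Type*} [Fintype A] [Fintype Q] [DecidableEq Q]

lemma wordMat_nil (T : A → Matrix Q Q ℝ) : wordMat T [] = 1 := rfl

lemma wordMat_cons (T : A → Matrix Q Q ℝ) (x : A) (w : List A) :
    wordMat T (x :: w) = T x * wordMat T w := by
  simp [wordMat]

lemma wordMat_append (T : A → Matrix Q Q ℝ) (u v : List A) :
    wordMat T (u ++ v) = wordMat T u * wordMat T v := by
  simp [wordMat]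

lemma sum_ofFn_cons (k : ℕ) (φ : List A → ℝ) :
    ∑ f : Fin (k+1) → A, φ (List.ofFn f)
      = ∑ x : A, ∑ f : Fin k → A, φ (x :: List.ofFn f) := by
  calc ∑ f : Fin (k+1) → A, φ (List.ofFn f)
      = ∑ p : A × (Fin k → A), φ (p.1 :: List.ofFn p.2) :=
        (Fintype.sum_equiv (Fin.consEquiv fun _ => A)
          (fun p => φ (p.1 :: List.ofFn p.2)) (fun f => φ (List.ofFn f))
          (fun p => by simp [Fin.consEquiv, List.ofFn_succ])).symm
    _ = ∑ x : A, ∑ f : Fin k → A, φ (x :: List.ofFn f) := Fintype.sum_prod_type _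

lemma sum_ofFn_snoc (k : ℕ) (φ : List A → ℝ) :
    ∑ f : Fin (k+1) → A, φ (List.ofFn f)
      = ∑ x : A, ∑ f : Fin k → A, φ (List.ofFn f ++ [x]) := by
  calc ∑ f : Fin (k+1) → A, φ (List.ofFn f)
      = ∑ p : A × (Fin k → A), φ (List.ofFn p.2 ++ [p.1]) :=
        (Fintype.sum_equiv (Fin.snocEquiv fun _ => A)
          (fun p => φ (List.ofFn p.2 ++ [p.1])) (fun f => φ (List.ofFn f))
          (fun p => by
            have h : List.ofFn (Fin.snoc p.2 p.1 : Fin (k+1) → A) = List.ofFn p.2 ++ [p.1] := by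
              rw [List.ofFn_succ']
              simp [List.concat_eq_append, Fin.snoc_castSucc]
            exact congrArg φ h.symm)).symm
    _ = ∑ x : A, ∑ f : Fin k → A, φ (List.ofFn f ++ [x]) := Fintype.sum_prod_type _


def Fsum (TB : A → Matrix Q Q ℝ) (k : ℕ) (q q' : Q) : ℝ :=
  ∑ f : Fin k → A, |wordMat TB (List.ofFn f) q q'|

def Esum (T TB : A → Matrix Q Q ℝ) (i k : ℕ) (q q' : Q) : ℝ :=
  ∑ g : Fin i → A, ∑ h : Fin k → A,
    |(wordMat T (List.ofFn g) * wordMat TB (List.ofFn h)) q q'|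

lemma Fsum_nonneg (TB : A → Matrix Q Q ℝ) (k : ℕ) (q q' : Q) : 0 ≤ Fsum TB k q q' :=
  Finset.sum_nonneg fun _ _ => abs_nonneg _

lemma Esum_zero_right (T TB : A → Matrix Q Q ℝ) (i : ℕ) (q q' : Q) :
    Esum T TB i 0 q q' = Fsum T i q q' := by
  unfold Esum Fsum
  refine Finset.sum_congr rfl fun g _ => ?_
  rw [Fintype.sum_unique]
  simp [wordMat_nil]

lemma Esum_zero_left (T TB : A → Matrix Q Q ℝ) (k : ℕ) (q q' : Q) :
    Esum T TB 0 k q q' = Fsum TB k q q' := by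
  unfold Esum Fsum
  rw [Fintype.sum_unique]
  simp [wordMat_nil]

lemma Esum_step (T TB : A → Matrix Q Q ℝ) (i k : ℕ) (q q' : Q) :
    Esum T TB i (k+1) q q' ≤ Esum T TB (i+1) k q q'
      + ∑ r, ∑ s, Fsum T i q r *
          ((∑ x : A, |TB x r s - T x r s|) * Fsum TB k s q') := by
  have expand : Esum T TB i (k+1) q q'
      = ∑ g : Fin i → A, ∑ x : A, ∑ h : Fin k → A,
          |(wordMat T (List.ofFn g) * (TB x * wordMat TB (List.ofFn h))) q q'| := by
    unfold Esum
    refine Finset.sum_congr rfl fun g _ => ?_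
    rw [sum_ofFn_cons k (fun w => |(wordMat T (List.ofFn g) * wordMat TB w) q q'|)]
    simp only [wordMat_cons]
  have key : ∀ (M N : Matrix Q Q ℝ) (x : A),
      |(M * (TB x * N)) q q'| ≤ |(M * T x * N) q q'|
        + ∑ r, ∑ s, |M q r| * (|TB x r s - T x r s| * |N s q'|) := by
    intro M N x
    have hsplit : M * (TB x * N) = M * T x * N + M * ((TB x - T x) * N) := by
      noncomm_ring
    rw [hsplit, Matrix.add_apply]
    refine (abs_add_le _ _).trans (add_le_add_right ?_ _)
    calc |(M * ((TB x - T x) * N)) q q'|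
        = |∑ r, M q r * ((TB x - T x) * N) r q'| := by rw [Matrix.mul_apply]
      _ ≤ ∑ r, |M q r * ((TB x - T x) * N) r q'| := Finset.abs_sum_le_sum_abs _ _
      _ ≤ ∑ r, ∑ s, |M q r| * (|TB x r s - T x r s| * |N s q'|) := by
          refine Finset.sum_le_sum fun r _ => ?_
          rw [abs_mul, Matrix.mul_apply]
          calc |M q r| * |∑ s, (TB x - T x) r s * N s q'|
              ≤ |M q r| * ∑ s, |(TB x - T x) r s * N s q'| :=
                mul_le_mul_of_nonneg_left (Finset.abs_sum_le_sum_abs _ _) (abs_nonneg _)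
            _ = ∑ s, |M q r| * (|TB x r s - T x r s| * |N s q'|) := by
                rw [Finset.mul_sum]
                refine Finset.sum_congr rfl fun s _ => ?_
                rw [abs_mul, Matrix.sub_apply]
  have first : (∑ g : Fin i → A, ∑ x : A, ∑ h : Fin k → A,
      |(wordMat T (List.ofFn g) * T x * wordMat TB (List.ofFn h)) q q'|)
      = Esum T TB (i+1) k q q' := by
    unfold Esum
    rw [sum_ofFn_snoc i (fun w => ∑ h : Fin k → A,
      |(wordMat T w * wordMat TB (List.ofFn h)) q q'|)]
    rw [Finset.sum_comm]
    refine Finset.sum_congr rfl fun g _ => Finset.sum_congr rfl fun x _ => ?_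
    simp [wordMat_append, wordMat_cons, wordMat_nil]
  have second : (∑ g : Fin i → A, ∑ x : A, ∑ h : Fin k → A, ∑ r, ∑ s,
      |wordMat T (List.ofFn g) q r| * (|TB x r s - T x r s| *
        |wordMat TB (List.ofFn h) s q'|))
      = ∑ r, ∑ s, Fsum T i q r *
          ((∑ x : A, |TB x r s - T x r s|) * Fsum TB k s q') := by
    have fub := Finset.sum_comm
      (s := (Finset.univ : Finset ((Fin i → A) × A × (Fin k → A))))
      (t := (Finset.univ : Finset (Q × Q)))
      (f := fun p rs => |wordMat T (List.ofFn p.1) q rs.1| *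
        (|TB p.2.1 rs.1 rs.2 - T p.2.1 rs.1 rs.2| *
          |wordMat TB (List.ofFn p.2.2) rs.2 q'|))
    simp only [Fintype.sum_prod_type] at fub
    rw [fub]
    refine Finset.sum_congr rfl fun r _ => Finset.sum_congr rfl fun s _ => ?_
    unfold Fsum
    simp only [← Finset.mul_sum, ← Finset.sum_mul]
  calc Esum T TB i (k+1) q q'
      ≤ ∑ g : Fin i → A, ∑ x : A, ∑ h : Fin k → A,
          (|(wordMat T (List.ofFn g) * T x * wordMat TB (List.ofFn h)) q q'|
          + ∑ r, ∑ s, |wordMat T (List.ofFn g) q r| * (|TB x r s - T x r s| *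
              |wordMat TB (List.ofFn h) s q'|)) := by
        rw [expand]
        exact Finset.sum_le_sum fun g _ => Finset.sum_le_sum fun x _ =>
          Finset.sum_le_sum fun h _ => key _ _ x
    _ = Esum T TB (i+1) k q q'
        + ∑ r, ∑ s, Fsum T i q r *
            ((∑ x : A, |TB x r s - T x r s|) * Fsum TB k s q') := by
        simp only [Finset.sum_add_distrib]
        rw [first, second]

end Aux

set_option maxHeartbeats 1000000 in
theorem statement0 {A Q : Type*} [Fintype A] [Nonempty A] [Fintype Q] [DecidableEq Q]
    (P : List A → ℝ) (hP : IsStochastic P)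
    (ι τ : Q → ℝ) (T : A → Matrix Q Q ℝ) (hred : IsReducedRep ι τ T P)
    (CA ρA : ℝ) (hCA : 0 < CA) (hρA : ρA ∈ Set.Ioo (0 : ℝ) 1)
    (hbound : ∀ (k : ℕ) (q q' : Q),
      ∑ f : Fin k → A, |wordMat T (List.ofFn f) q q'| ≤ CA * ρA ^ k) :
    ∀ ρ : ℝ, ρA < ρ → ρ < 1 →
      ∃ C > (0 : ℝ), ∃ α > (0 : ℝ), ∀ (ιB τB : Q → ℝ) (TB : A → Matrix Q Q ℝ),
        (∀ (x : A) (q q' : Q), |TB x q q' - T x q q'| < α) →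
        (∀ (k : ℕ) (q q' : Q),
          ∑ f : Fin k → A, |wordMat TB (List.ofFn f) q q'| ≤ C * ρ ^ k) ∧
        Summable (fun w : List A => |maSeries ιB τB TB w|) := by

  obtain ⟨hρA0, hρA1⟩ := hρA
  intro ρ hρ1 hρ2
  set n : ℝ := (Fintype.card Q : ℝ) with hn
  set a : ℝ := (Fintype.card A : ℝ) with ha
  have ha1 : (1:ℝ) ≤ a := by
    rw [ha]; exact_mod_cast Fintype.card_pos
  have ha0 : (0:ℝ) < a := lt_of_lt_of_le one_pos ha1
  have hn0 : (0:ℝ) ≤ n := by rw [hn]; positivity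
  have hρ0 : 0 < ρ := hρA0.trans hρ1
  have hgap : 0 < ρ - ρA := by linarith
  set C : ℝ := 2 * CA + 1 with hC
  set αv : ℝ := (ρ - ρA) / (2 * a * (n ^ 2 + 1) * (CA + 1)) with hα
  have hden : 0 < 2 * a * (n ^ 2 + 1) * (CA + 1) := by positivity
  have hαpos : 0 < αv := div_pos hgap hden
  have hCpos : 0 < C := by linarith
  refine ⟨C, hCpos, αv, hαpos, ?_⟩
  intro ιB τB TB hTB
  set d : ℝ := a * αv with hd
  have hd0 : 0 ≤ d := by positivity
  set C' : ℝ := 1 + n ^ 2 * d * C / (ρ - ρA) with hC'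
  have hC'1 : 1 ≤ C' := le_add_of_nonneg_right (by positivity)
  have hC'0 : 0 ≤ C' := le_trans zero_le_one hC'1
  have hDb : ∀ r s : Q, (∑ x : A, |TB x r s - T x r s|) ≤ d := by
    intro r s
    calc ∑ x : A, |TB x r s - T x r s| ≤ ∑ _x : A, αv :=
          Finset.sum_le_sum fun x _ => (hTB x r s).le
      _ = a * αv := by
          rw [Finset.sum_const, Finset.card_univ, nsmul_eq_mul, ha]
  have hDb0 : ∀ r s : Q, 0 ≤ ∑ x : A, |TB x r s - T x r s| :=
    fun r s => Finset.sum_nonneg fun _ _ => abs_nonneg _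
  have hMb : ∀ (i : ℕ) (q r : Q), Fsum T i q r ≤ CA * ρA ^ i :=
    fun i q r => hbound i q r
  have key : ∀ (k : ℕ) (q q' : Q), Fsum TB k q q' ≤ C * ρ ^ k := by
    intro k
    induction k using Nat.strong_induction_on with
    | _ k IH =>
    intro q q'
    have inner : ∀ m, m ≤ k → ∀ (i : ℕ) (q q' : Q),
        Esum T TB i m q q' ≤ CA * ρA ^ i * (C' * ρ ^ m) := by
      intro m
      induction m with
      | zero =>
        intro _ i q q'
        rw [Esum_zero_right]
        have h0 : (0:ℝ) ≤ CA * ρA ^ i := by positivity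
        calc Fsum T i q q' ≤ CA * ρA ^ i := hMb i q q'
          _ ≤ CA * ρA ^ i * (C' * ρ ^ 0) := by
              rw [pow_zero, mul_one]
              nlinarith
      | succ m ihm =>
        intro hmk i q q'
        have hm' : m ≤ k := le_trans (Nat.le_succ m) hmk
        have hF : ∀ (s q' : Q), Fsum TB m s q' ≤ C * ρ ^ m :=
          fun s q'' => IH m (lt_of_lt_of_le (Nat.lt_succ_self m) hmk) s q''
        have h1 := Esum_step T TB i m q q'
        have h2 : Esum T TB (i+1) m q q' ≤ CA * ρA ^ (i+1) * (C' * ρ ^ m) :=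
          ihm hm' (i+1) q q'
        have h3 : (∑ r, ∑ s, Fsum T i q r *
            ((∑ x : A, |TB x r s - T x r s|) * Fsum TB m s q'))
            ≤ n * (n * (CA * ρA ^ i * (d * (C * ρ ^ m)))) := by
          have hterm : ∀ r s : Q, Fsum T i q r *
              ((∑ x : A, |TB x r s - T x r s|) * Fsum TB m s q')
              ≤ CA * ρA ^ i * (d * (C * ρ ^ m)) := by
            intro r s
            have hmm : (∑ x : A, |TB x r s - T x r s|) * Fsum TB m s q'
                ≤ d * (C * ρ ^ m) :=
              mul_le_mul (hDb r s) (hF s q') (Fsum_nonneg _ _ _ _) hd0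
            exact mul_le_mul (hMb i q r) hmm
              (mul_nonneg (hDb0 r s) (Fsum_nonneg _ _ _ _))
              (by positivity)
          calc (∑ r, ∑ s, Fsum T i q r *
              ((∑ x : A, |TB x r s - T x r s|) * Fsum TB m s q'))
              ≤ ∑ _r : Q, ∑ _s : Q, CA * ρA ^ i * (d * (C * ρ ^ m)) :=
                Finset.sum_le_sum fun r _ => Finset.sum_le_sum fun s _ => hterm r s
            _ = n * (n * (CA * ρA ^ i * (d * (C * ρ ^ m)))) := by
                rw [Finset.sum_const, Finset.sum_const, Finset.card_univ,
                  nsmul_eq_mul, nsmul_eq_mul, hn]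
        have hXd : n ^ 2 * d * C = (C' - 1) * (ρ - ρA) := by
          rw [hC']
          field_simp
          ring
        have hcore : ρA * C' + n ^ 2 * d * C ≤ C' * ρ := by nlinarith
        calc Esum T TB i (m+1) q q'
            ≤ CA * ρA ^ (i+1) * (C' * ρ ^ m)
              + n * (n * (CA * ρA ^ i * (d * (C * ρ ^ m)))) := by linarith
          _ = CA * ρA ^ i * ρ ^ m * (ρA * C' + n ^ 2 * d * C) := by ring
          _ ≤ CA * ρA ^ i * ρ ^ m * (C' * ρ) := by
              refine mul_le_mul_of_nonneg_left hcore (by positivity)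
          _ = CA * ρA ^ i * (C' * ρ ^ (m+1)) := by ring
    have hk := inner k le_rfl 0 q q'
    rw [Esum_zero_left] at hk
    have e1 : n ^ 2 * d * C / (ρ - ρA) = n ^ 2 * C / (2 * (n ^ 2 + 1) * (CA + 1)) := by
      rw [hd, hα]
      field_simp
    have hhalf : CA * (n ^ 2 * C / (2 * (n ^ 2 + 1) * (CA + 1))) ≤ C / 2 := by
      rw [← mul_div_assoc, div_le_div_iff₀ (by positivity) two_pos]
      nlinarith [sq_nonneg n, hCA.le, hCpos.le,
        mul_nonneg hCpos.le (by positivity : (0:ℝ) ≤ n ^ 2 + CA + 1)]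
    have hfin : CA * C' ≤ C := by
      rw [hC', e1, mul_one_add]
      linarith [hhalf]
    calc Fsum TB k q q' ≤ CA * ρA ^ 0 * (C' * ρ ^ k) := hk
      _ = CA * C' * ρ ^ k := by ring
      _ ≤ C * ρ ^ k := mul_le_mul_of_nonneg_right hfin (by positivity)
  refine ⟨fun k q q' => key k q q', ?_⟩
  -- summability
  have hsum_h : ∀ q q' : Q, Summable (fun w : List A => |wordMat TB w q q'|) := by
    intro q q'
    have hsig : Summable (fun p : (Σ n : ℕ, Fin n → A) =>
        |wordMat TB (List.ofFn p.2) q q'|) := by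
      apply (summable_sigma_of_nonneg (fun p => abs_nonneg _)).2
      refine ⟨fun nn => Summable.of_finite, ?_⟩
      apply Summable.of_nonneg_of_le
        (fun nn => tsum_nonneg fun f => abs_nonneg _)
        (fun nn => ?_)
        ((summable_geometric_of_lt_one hρ0.le hρ2).mul_left C)
      rw [tsum_fintype]
      exact key nn q q'
    exact (Equiv.summable_iff (List.equivSigmaTuple (α := A)).symm).mp hsig
  have hg : Summable (fun w : List A =>
      ∑ q : Q, ∑ q' : Q, |ιB q| * |wordMat TB w q q'| * |τB q'|) := by
    refine summable_sum fun q _ => summable_sum fun q' _ => ?_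
    exact ((hsum_h q q').mul_left |ιB q|).mul_right |τB q'|
  refine Summable.of_nonneg_of_le (fun w => abs_nonneg _) (fun w => ?_) hg
  have hms : maSeries ιB τB TB w
      = ∑ q : Q, ιB q * ∑ q' : Q, wordMat TB w q q' * τB q' := by
    simp [maSeries, dotProduct, Matrix.mulVec]
  rw [hms]
  calc |∑ q : Q, ιB q * ∑ q' : Q, wordMat TB w q q' * τB q'|
      ≤ ∑ q : Q, |ιB q * ∑ q' : Q, wordMat TB w q q' * τB q'| :=
        Finset.abs_sum_le_sum_abs _ _
    _ ≤ ∑ q : Q, ∑ q' : Q, |ιB q| * |wordMat TB w q q'| * |τB q'| := by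
        refine Finset.sum_le_sum fun q _ => ?_
        rw [abs_mul]
        calc |ιB q| * |∑ q' : Q, wordMat TB w q q' * τB q'|
            ≤ |ιB q| * ∑ q' : Q, |wordMat TB w q q' * τB q'| :=
              mul_le_mul_of_nonneg_left (Finset.abs_sum_le_sum_abs _ _) (abs_nonneg _)
          _ = ∑ q' : Q, |ιB q| * |wordMat TB w q q'| * |τB q'| := by
              rw [Finset.mul_sum]
              refine Finset.sum_congr rfl fun q' _ => ?_
              rw [abs_mul]
              ring
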